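/- There exists an absolute constant C (independent of V, A, V_ms, δ, f, T, and the initial data) such that the following holds. Assume δ ≥ 0 satisfies ‖w − Pw‖ ≤ δ²‖Aw‖ for all w ∈ V. Let u : [0,T] → V be twice continuously differentiable with u'(t) + A u(t) = f(t) and u(0) = u_0, and let u_ms : [0,T] → V_ms be continuously differentiable with ⟨u_ms'(t) + A u_ms(t) − f(t), v⟩ = 0 for all v ∈ V_ms and all t. Then ‖(u − u_ms)(T)‖ ≤ ‖u(0) − u_ms(0)‖ + C δ² ( max_{0 ≤ t ≤ T} ‖f(t) − u'(t)‖ + ∫_0^T ‖f'(t) − u''(t)‖ dt ). (L²-norm a priori error estimate for the Galerkin semidiscretization.) -/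

import Mathlib

open scoped RealInnerProductSpace

/-- L²-norm a priori error estimate for the Galerkin semidiscretization of the
parabolic problem: there is an absolute constant `C` such that
`‖(u−u_ms)(T)‖ ≤ ‖u(0)−u_ms(0)‖ + Cδ²(max_{[0,T]} ‖f−u'‖ + ∫₀ᵀ ‖f'−u''‖)`. -/
theorem stmt_14 : ∃ C : ℝ, 0 ≤ C ∧
    ∀ (V : Type*) [NormedAddCommGroup V] [InnerProductSpace ℝ V] [FiniteDimensional ℝ V]
      (A : V →ₗ[ℝ] V),
      (∀ x y : V, ⟪A x, y⟫ = ⟪x, A y⟫) →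
      (∀ x : V, x ≠ 0 → 0 < ⟪A x, x⟫) →
      ∀ (Vms : Submodule ℝ V) (P : V → V),
      (∀ w : V, P w ∈ Vms) →
      (∀ w : V, ∀ v ∈ Vms, ⟪A (w - P w), v⟫ = 0) →
      ∀ δ : ℝ, 0 ≤ δ →
      (∀ w : V, ‖w - P w‖ ≤ δ ^ 2 * ‖A w‖) →
      ∀ T : ℝ, 0 < T →
      ∀ f f' : ℝ → V,
      (∀ t ∈ Set.Icc (0 : ℝ) T, HasDerivAt f (f' t) t) →
      ContinuousOn f' (Set.Icc (0 : ℝ) T) →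
      ∀ (u0 : V) (u u' u'' : ℝ → V),
      (∀ t ∈ Set.Icc (0 : ℝ) T, HasDerivAt u (u' t) t) →
      (∀ t ∈ Set.Icc (0 : ℝ) T, HasDerivAt u' (u'' t) t) →
      ContinuousOn u'' (Set.Icc (0 : ℝ) T) →
      (∀ t ∈ Set.Icc (0 : ℝ) T, u' t + A (u t) = f t) →
      u 0 = u0 →
      ∀ ums ums' : ℝ → V,
      (∀ t : ℝ, ums t ∈ Vms) →
      (∀ t ∈ Set.Icc (0 : ℝ) T, HasDerivAt ums (ums' t) t) →
      ContinuousOn ums' (Set.Icc (0 : ℝ) T) →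
      (∀ t ∈ Set.Icc (0 : ℝ) T, ∀ v ∈ Vms, ⟪ums' t + A (ums t) - f t, v⟫ = 0) →
      ‖u T - ums T‖ ≤ ‖u 0 - ums 0‖ + C * δ ^ 2 *
        (sSup ((fun t => ‖f t - u' t‖) '' Set.Icc (0 : ℝ) T) +
          ∫ t in (0 : ℝ)..T, ‖f' t - u'' t‖) := by
  refine ⟨2, by norm_num, ?_⟩
  intro V _ _ _ A hA_sym hA_pos Vms P hPmem hPorth δ hδ hP T hT f f' hf hf'c u0 u u' u''
    hu hu' hu''c hPDE hu0 ums ums' hums_mem hums hums'c hGal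
  have h0I : (0:ℝ) ∈ Set.Icc (0:ℝ) T := Set.left_mem_Icc.mpr hT.le
  have hTI : T ∈ Set.Icc (0:ℝ) T := Set.right_mem_Icc.mpr hT.le
  have hA_nonneg : ∀ x : V, 0 ≤ ⟪A x, x⟫ := by
    intro x
    rcases eq_or_ne x 0 with h | h
    · simp [h]
    · exact (hA_pos x h).le
  have hA_def : ∀ x : V, ⟪A x, x⟫ = 0 → x = 0 := by
    intro x hx
    by_contra h
    exact (hA_pos x h).ne' hx
  have hPinner : ∀ w : V, ∀ v ∈ Vms, ⟪A (P w), v⟫ = ⟪A w, v⟫ := by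
    intro w v hv
    have h := hPorth w v hv
    rw [map_sub, inner_sub_left] at h
    linarith
  have hPadd : ∀ w₁ w₂ : V, P (w₁ + w₂) = P w₁ + P w₂ := by
    intro w₁ w₂
    have hd : P (w₁ + w₂) - (P w₁ + P w₂) ∈ Vms :=
      Vms.sub_mem (hPmem _) (Vms.add_mem (hPmem _) (hPmem _))
    have hz : ⟪A (P (w₁ + w₂) - (P w₁ + P w₂)), P (w₁ + w₂) - (P w₁ + P w₂)⟫ = 0 := by
      have h1 := hPinner (w₁ + w₂) _ hd
      have h2 := hPinner w₁ _ hd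
      have h3 := hPinner w₂ _ hd
      simp only [map_add, map_sub, inner_sub_left, inner_add_left] at h1 h2 h3 ⊢
      linarith
    exact sub_eq_zero.mp (hA_def _ hz)
  have hPsmul : ∀ (c : ℝ) (w : V), P (c • w) = c • P w := by
    intro c w
    have hd : P (c • w) - c • P w ∈ Vms := Vms.sub_mem (hPmem _) (Vms.smul_mem c (hPmem _))
    have hz : ⟪A (P (c • w) - c • P w), P (c • w) - c • P w⟫ = 0 := by
      have h1 := hPinner (c • w) _ hd
      have h2 := hPinner w _ hd
      simp only [map_smul, map_sub, inner_sub_left, real_inner_smul_left] at h1 h2 ⊢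
      rw [h2] at *
      linarith
    exact sub_eq_zero.mp (hA_def _ hz)
  let Pl : V →ₗ[ℝ] V :=
    { toFun := P, map_add' := hPadd, map_smul' := hPsmul }
  have hPcont : Continuous P := Pl.continuous_of_finiteDimensional
  have hAcont : Continuous A := A.continuous_of_finiteDimensional
  -- derivative of t ↦ P (u t)
  have hPu : ∀ t ∈ Set.Icc (0:ℝ) T, HasDerivAt (fun s => P (u s)) (P (u' t)) t := by
    intro t ht
    exact (LinearMap.toContinuousLinearMap Pl).hasFDerivAt.comp_hasDerivAt t (hu t ht)
  have hθd : ∀ t ∈ Set.Icc (0:ℝ) T,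
      HasDerivAt (fun s => P (u s) - ums s) (P (u' t) - ums' t) t :=
    fun t ht => (hPu t ht).sub (hums t ht)
  -- continuity
  have huc : ContinuousOn u (Set.Icc (0:ℝ) T) :=
    fun t ht => (hu t ht).continuousAt.continuousWithinAt
  have hu'c : ContinuousOn u' (Set.Icc (0:ℝ) T) :=
    fun t ht => (hu' t ht).continuousAt.continuousWithinAt
  have hfc : ContinuousOn f (Set.Icc (0:ℝ) T) :=
    fun t ht => (hf t ht).continuousAt.continuousWithinAt
  have humsc : ContinuousOn ums (Set.Icc (0:ℝ) T) :=
    fun t ht => (hums t ht).continuousAt.continuousWithinAt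
  have hθc : ContinuousOn (fun s => P (u s) - ums s) (Set.Icc (0:ℝ) T) :=
    (hPcont.comp_continuousOn huc).sub humsc
  have hθ'c : ContinuousOn (fun s => P (u' s) - ums' s) (Set.Icc (0:ℝ) T) :=
    (hPcont.comp_continuousOn hu'c).sub hums'c
  have hρ'c : ContinuousOn (fun s => u' s - P (u' s)) (Set.Icc (0:ℝ) T) :=
    hu'c.sub (hPcont.comp_continuousOn hu'c)
  -- the key Galerkin orthogonality inequality
  have hkey : ∀ t ∈ Set.Icc (0:ℝ) T,
      ⟪P (u' t) - ums' t, P (u t) - ums t⟫ ≤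
        ‖u' t - P (u' t)‖ * ‖P (u t) - ums t‖ := by
    intro t ht
    set v := P (u t) - ums t with hv
    have hvmem : v ∈ Vms := Vms.sub_mem (hPmem _) (hums_mem t)
    have h1 := hGal t ht v hvmem
    have h2 : A (u t) = f t - u' t := eq_sub_of_add_eq' (hPDE t ht)
    have h3 := hPinner (u t) v hvmem
    have hCS : -⟪u' t - P (u' t), v⟫ ≤ ‖u' t - P (u' t)‖ * ‖v‖ := by
      have := real_inner_le_norm (-(u' t - P (u' t))) v
      rwa [inner_neg_left, norm_neg] at this
    have hApos : 0 ≤ ⟪A v, v⟫ := hA_nonneg v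
    have heq : ⟪P (u' t) - ums' t, v⟫ = -⟪A v, v⟫ - ⟪u' t - P (u' t), v⟫ := by
      rw [h2] at h3
      simp only [hv, map_sub, inner_sub_left, inner_add_left] at h1 h3 ⊢
      linarith
    linarith
  -- endpoint bounds for ρ
  have hρ : ∀ t ∈ Set.Icc (0:ℝ) T, ‖u t - P (u t)‖ ≤ δ ^ 2 * ‖f t - u' t‖ := by
    intro t ht
    have h2 : A (u t) = f t - u' t := eq_sub_of_add_eq' (hPDE t ht)
    have := hP (u t)
    rwa [h2] at this
  -- interior identity for derivatives
  have hAu' : ∀ t ∈ Set.Ioo (0:ℝ) T, A (u' t) = f' t - u'' t := by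
    intro t ht
    have htI := Set.Ioo_subset_Icc_self ht
    have hmem : Set.Icc (0:ℝ) T ∈ nhds t := Icc_mem_nhds ht.1 ht.2
    have h1 : HasDerivAt (fun s => u' s + A (u s)) (u'' t + A (u' t)) t :=
      (hu' t htI).add ((LinearMap.toContinuousLinearMap A).hasFDerivAt.comp_hasDerivAt t (hu t htI))
    have hev : f =ᶠ[nhds t] (fun s => u' s + A (u s)) :=
      Filter.eventually_of_mem hmem fun s hs => (hPDE s hs).symm
    have h2 : HasDerivAt f (u'' t + A (u' t)) t := h1.congr_of_eventuallyEq hev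
    have h3 : u'' t + A (u' t) = f' t := h2.unique (hf t htI)
    rw [← h3]; abel
  -- integrability
  have hRint : IntervalIntegrable (fun s => ‖u' s - P (u' s)‖) MeasureTheory.volume 0 T := by
    apply ContinuousOn.intervalIntegrable
    rw [Set.uIcc_of_le hT.le]
    exact hρ'c.norm
  have hGint : IntervalIntegrable (fun s => δ ^ 2 * ‖f' s - u'' s‖) MeasureTheory.volume 0 T := by
    apply ContinuousOn.intervalIntegrable
    rw [Set.uIcc_of_le hT.le]
    exact continuousOn_const.mul ((hf'c.sub hu''c).norm)
  have hNint : IntervalIntegrable (fun s => ‖f' s - u'' s‖) MeasureTheory.volume 0 T := by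
    apply ContinuousOn.intervalIntegrable
    rw [Set.uIcc_of_le hT.le]
    exact (hf'c.sub hu''c).norm
  -- ∫ ‖ρ'‖ ≤ δ² ∫ ‖f' - u''‖
  have hint2 : (∫ s in (0:ℝ)..T, ‖u' s - P (u' s)‖) ≤
      ∫ s in (0:ℝ)..T, δ ^ 2 * ‖f' s - u'' s‖ := by
    apply intervalIntegral.integral_mono_ae_restrict hT.le hRint hGint
    have hfin : (MeasureTheory.volume : MeasureTheory.Measure ℝ) ({0, T} : Set ℝ) = 0 :=
      Set.Finite.measure_zero (Set.toFinite _) _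
    have hae : ∀ᵐ s ∂(MeasureTheory.volume : MeasureTheory.Measure ℝ), s ∉ ({0, T} : Set ℝ) :=
      MeasureTheory.measure_eq_zero_iff_ae_notMem.mp hfin
    filter_upwards [MeasureTheory.ae_restrict_mem measurableSet_Icc,
      MeasureTheory.ae_restrict_of_ae hae] with s hs1 hs2
    simp only [Set.mem_insert_iff, Set.mem_singleton_iff, not_or] at hs2
    have hs' : s ∈ Set.Ioo (0:ℝ) T :=
      ⟨lt_of_le_of_ne hs1.1 (Ne.symm hs2.1), lt_of_le_of_ne hs1.2 hs2.2⟩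
    have := hP (u' s)
    rwa [hAu' s hs'] at this
  -- the regularized energy estimate
  have hmain : ∀ ε : ℝ, 0 < ε →
      Real.sqrt (‖P (u T) - ums T‖ ^ 2 + ε) ≤
        Real.sqrt (‖P (u 0) - ums 0‖ ^ 2 + ε) +
          ∫ s in (0:ℝ)..T, ‖u' s - P (u' s)‖ := by
    intro ε hε
    set θ := fun s => P (u s) - ums s with hθdef
    set θ' := fun s => P (u' s) - ums' s with hθ'def
    set D := fun s => (⟪θ s, θ' s⟫ + ⟪θ' s, θ s⟫) / (2 * Real.sqrt (⟪θ s, θ s⟫ + ε)) with hD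
    have hpos : ∀ s : ℝ, 0 < ⟪θ s, θ s⟫ + ε :=
      fun s => add_pos_of_nonneg_of_pos real_inner_self_nonneg hε
    have hφd : ∀ s ∈ Set.Icc (0:ℝ) T,
        HasDerivAt (fun r => Real.sqrt (⟪θ r, θ r⟫ + ε)) (D s) s := by
      intro s hs
      have h1 : HasDerivAt (fun r => ⟪θ r, θ r⟫ + ε)
          (⟪θ s, θ' s⟫ + ⟪θ' s, θ s⟫) s :=
        (HasDerivAt.inner ℝ (hθd s hs) (hθd s hs)).add_const ε
      exact h1.sqrt (hpos s).ne'
    have hDle : ∀ s ∈ Set.Icc (0:ℝ) T, D s ≤ ‖u' s - P (u' s)‖ := by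
      intro s hs
      have h1 := hkey s hs
      have hsp : 0 < Real.sqrt (⟪θ s, θ s⟫ + ε) := Real.sqrt_pos.mpr (hpos s)
      have hle : ‖θ s‖ ≤ Real.sqrt (⟪θ s, θ s⟫ + ε) := by
        rw [real_inner_self_eq_norm_sq]
        calc ‖θ s‖ = Real.sqrt (‖θ s‖ ^ 2) := (Real.sqrt_sq (norm_nonneg _)).symm
          _ ≤ _ := Real.sqrt_le_sqrt (by linarith)
      have hsymm : ⟪θ s, θ' s⟫ = ⟪θ' s, θ s⟫ := real_inner_comm _ _
      rw [hD, div_le_iff₀ (by positivity)]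
      have h2 : ‖u' s - P (u' s)‖ * ‖θ s‖ ≤
          ‖u' s - P (u' s)‖ * Real.sqrt (⟪θ s, θ s⟫ + ε) :=
        mul_le_mul_of_nonneg_left hle (norm_nonneg _)
      calc ⟪θ s, θ' s⟫ + ⟪θ' s, θ s⟫ = 2 * ⟪θ' s, θ s⟫ := by rw [hsymm]; ring
        _ ≤ 2 * (‖u' s - P (u' s)‖ * ‖θ s‖) := by linarith
        _ ≤ 2 * (‖u' s - P (u' s)‖ * Real.sqrt (⟪θ s, θ s⟫ + ε)) := by linarith
        _ = ‖u' s - P (u' s)‖ * (2 * Real.sqrt (⟪θ s, θ s⟫ + ε)) := by ring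
    have hDc : ContinuousOn D (Set.Icc (0:ℝ) T) := by
      apply ContinuousOn.div
      · exact (hθc.inner hθ'c).add (hθ'c.inner hθc)
      · exact continuousOn_const.mul
          (Real.continuous_sqrt.comp_continuousOn ((hθc.inner hθc).add continuousOn_const))
      · intro s _
        have hsp : 0 < Real.sqrt (⟪θ s, θ s⟫ + ε) := Real.sqrt_pos.mpr (hpos s)
        positivity
    have hDint : IntervalIntegrable D MeasureTheory.volume 0 T := by
      apply ContinuousOn.intervalIntegrable
      rw [Set.uIcc_of_le hT.le]
      exact hDc
    have hFTC : (∫ s in (0:ℝ)..T, D s) =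
        Real.sqrt (⟪θ T, θ T⟫ + ε) - Real.sqrt (⟪θ 0, θ 0⟫ + ε) := by
      apply intervalIntegral.integral_eq_sub_of_hasDerivAt
      · rw [Set.uIcc_of_le hT.le]
        exact hφd
      · exact hDint
    have hmono : (∫ s in (0:ℝ)..T, D s) ≤ ∫ s in (0:ℝ)..T, ‖u' s - P (u' s)‖ :=
      intervalIntegral.integral_mono_on hT.le hDint hRint hDle
    rw [hFTC] at hmono
    have e1 : ⟪θ T, θ T⟫ = ‖P (u T) - ums T‖ ^ 2 := real_inner_self_eq_norm_sq _
    have e2 : ⟪θ 0, θ 0⟫ = ‖P (u 0) - ums 0‖ ^ 2 := real_inner_self_eq_norm_sq _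
    rw [e1, e2] at hmono
    linarith
  -- limit ε → 0
  have hθT : ‖P (u T) - ums T‖ ≤ ‖P (u 0) - ums 0‖ + ∫ s in (0:ℝ)..T, ‖u' s - P (u' s)‖ := by
    by_contra hcon
    push_neg at hcon
    set η := (‖P (u T) - ums T‖ - (‖P (u 0) - ums 0‖ + ∫ s in (0:ℝ)..T, ‖u' s - P (u' s)‖)) / 2
      with hη
    have hηpos : 0 < η := by rw [hη]; linarith
    have h := hmain (η ^ 2) (by positivity)
    have hl : ‖P (u T) - ums T‖ ≤ Real.sqrt (‖P (u T) - ums T‖ ^ 2 + η ^ 2) := by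
      calc ‖P (u T) - ums T‖ = Real.sqrt (‖P (u T) - ums T‖ ^ 2) :=
            (Real.sqrt_sq (norm_nonneg _)).symm
        _ ≤ _ := Real.sqrt_le_sqrt (le_add_of_nonneg_right (by positivity))
    have hr : Real.sqrt (‖P (u 0) - ums 0‖ ^ 2 + η ^ 2) ≤ ‖P (u 0) - ums 0‖ + η := by
      rw [show ‖P (u 0) - ums 0‖ + η = Real.sqrt ((‖P (u 0) - ums 0‖ + η) ^ 2) from
        (Real.sqrt_sq (by linarith [norm_nonneg (P (u 0) - ums 0)])).symm]
      apply Real.sqrt_le_sqrt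
      nlinarith [norm_nonneg (P (u 0) - ums 0)]
    linarith
  -- sSup bounds
  set M := sSup ((fun t => ‖f t - u' t‖) '' Set.Icc (0 : ℝ) T) with hM
  have hbdd : BddAbove ((fun t => ‖f t - u' t‖) '' Set.Icc (0 : ℝ) T) :=
    (isCompact_Icc.image_of_continuousOn ((hfc.sub hu'c).norm)).bddAbove
  have hMb : ∀ t ∈ Set.Icc (0:ℝ) T, ‖f t - u' t‖ ≤ M :=
    fun t ht => le_csSup hbdd ⟨t, ht, rfl⟩
  have hM0 : 0 ≤ M := le_trans (norm_nonneg _) (hMb 0 h0I)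
  have hInt0 : 0 ≤ ∫ s in (0:ℝ)..T, ‖f' s - u'' s‖ :=
    intervalIntegral.integral_nonneg hT.le (fun s _ => norm_nonneg _)
  have hconst : (∫ s in (0:ℝ)..T, δ ^ 2 * ‖f' s - u'' s‖) =
      δ ^ 2 * ∫ s in (0:ℝ)..T, ‖f' s - u'' s‖ :=
    intervalIntegral.integral_const_mul _ _
  -- final assembly
  have hsplit : ‖u T - ums T‖ ≤ ‖u T - P (u T)‖ + ‖P (u T) - ums T‖ := by
    have : u T - ums T = (u T - P (u T)) + (P (u T) - ums T) := by abel
    rw [this]; exact norm_add_le _ _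
  have hsplit0 : ‖P (u 0) - ums 0‖ ≤ ‖u 0 - P (u 0)‖ + ‖u 0 - ums 0‖ := by
    have : P (u 0) - ums 0 = -(u 0 - P (u 0)) + (u 0 - ums 0) := by abel
    rw [this]
    calc ‖-(u 0 - P (u 0)) + (u 0 - ums 0)‖ ≤ ‖-(u 0 - P (u 0))‖ + ‖u 0 - ums 0‖ :=
          norm_add_le _ _
      _ = _ := by rw [norm_neg]
  have hρT := hρ T hTI
  have hρ0 := hρ 0 h0I
  have hMT := hMb T hTI
  have hM0' := hMb 0 h0I
  have hδ2 : 0 ≤ δ ^ 2 := by positivity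
  have b1 : ‖u T - P (u T)‖ ≤ δ ^ 2 * M :=
    le_trans hρT (mul_le_mul_of_nonneg_left hMT hδ2)
  have b2 : ‖u 0 - P (u 0)‖ ≤ δ ^ 2 * M :=
    le_trans hρ0 (mul_le_mul_of_nonneg_left hM0' hδ2)
  have b3 : (∫ s in (0:ℝ)..T, ‖u' s - P (u' s)‖) ≤
      δ ^ 2 * ∫ s in (0:ℝ)..T, ‖f' s - u'' s‖ := by rw [← hconst]; exact hint2
  calc ‖u T - ums T‖ ≤ ‖u T - P (u T)‖ + ‖P (u T) - ums T‖ := hsplit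
    _ ≤ ‖u T - P (u T)‖ + (‖P (u 0) - ums 0‖ + ∫ s in (0:ℝ)..T, ‖u' s - P (u' s)‖) := by
        linarith
    _ ≤ ‖u 0 - ums 0‖ + 2 * δ ^ 2 * (M + ∫ s in (0:ℝ)..T, ‖f' s - u'' s‖) := by
        nlinarith [hsplit0]
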